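/- Let p(z) be a rational function of the form 1/(1-bz)^t where |b - ζ^i| < 1 for some M-th root of unity ζ^i and t ≥ 0. Then 1/(1-bz)^t can be written as a linear combination of functions of the form z^i/(1-az^M)^k with 0 ≤ k, 0 ≤ i < M, and |1-a| < 1, where a = b^M. -/

import Mathlib

open Filter Finset Polynomial


lemma na_sum {K : Type*} [NormedField K] (hna : IsNonarchimedean (norm : K → ℝ))
    {ι : Type*} (s : Finset ι) (g : ι → K) (h : ∀ i ∈ s, ‖g i‖ ≤ 1) :
    ‖∑ i ∈ s, g i‖ ≤ 1 := by
  classical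
  induction s using Finset.induction with
  | empty => simp
  | insert a s' hx ih =>
    rw [Finset.sum_insert hx]
    exact le_trans (hna _ _) (max_le (h _ (Finset.mem_insert_self _ _))
      (ih fun i hi => h i (Finset.mem_insert_of_mem hi)))

lemma norm_part {K : Type*} [NormedField K]
    (hna : IsNonarchimedean (norm : K → ℝ))
    (M : ℕ) (hM : 0 < M) (ζ : K) (hζ : IsPrimitiveRoot ζ M)
    (b : K) (i : ℕ) (hb : ‖b - ζ ^ i‖ < 1) : ‖1 - b ^ M‖ < 1 := by
  have hζ1 : ‖ζ‖ = 1 := by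
    have hp : ‖ζ‖ ^ M = 1 := by rw [← norm_pow, hζ.pow_eq_one, norm_one]
    rcases lt_trichotomy ‖ζ‖ 1 with h | h | h
    · exact absurd hp (by nlinarith [pow_lt_one₀ (norm_nonneg ζ) h hM.ne'])
    · exact h
    · exact absurd hp (by nlinarith [one_lt_pow₀ h hM.ne'])
  have hx1 : ‖ζ ^ i‖ = 1 := by rw [norm_pow, hζ1, one_pow]
  have hble : ‖b‖ ≤ 1 := by
    have : b = (b - ζ ^ i) + ζ ^ i := by ring
    rw [this]
    exact le_trans (hna _ _) (max_le hb.le hx1.le)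
  have hxM : (ζ ^ i) ^ M = 1 := by
    rw [← pow_mul, mul_comm, pow_mul, hζ.pow_eq_one, one_pow]
  have key : (∑ k ∈ range M, (ζ ^ i) ^ k * b ^ (M - 1 - k)) * (ζ ^ i - b)
      = 1 - b ^ M := by rw [geom_sum₂_mul, hxM]
  have hsum : ‖∑ k ∈ range M, (ζ ^ i) ^ k * b ^ (M - 1 - k)‖ ≤ 1 := by
    apply na_sum hna
    intro k _
    rw [norm_mul, norm_pow, norm_pow, norm_pow, hζ1, one_pow, one_pow, one_mul]
    exact pow_le_one₀ (norm_nonneg b) hble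
  calc ‖1 - b ^ M‖ = ‖∑ k ∈ range M, (ζ ^ i) ^ k * b ^ (M - 1 - k)‖ * ‖ζ ^ i - b‖ := by
        rw [← norm_mul, key]
    _ ≤ 1 * ‖ζ ^ i - b‖ := by
        apply mul_le_mul_of_nonneg_right hsum (norm_nonneg _)
    _ = ‖b - ζ ^ i‖ := by rw [one_mul, norm_sub_rev]
    _ < 1 := hb


lemma prod_one_sub {F : Type*} [Field F] {M : ℕ} (hM : 0 < M) {ζ : F}
    (hζ : IsPrimitiveRoot ζ M) (u : F) :
    ∏ j ∈ Finset.range M, (1 - ζ ^ j * u) = 1 - u ^ M := by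
  rcases eq_or_ne u 0 with rfl | hu
  · simp [hM.ne']
  · have hpoly := X_pow_sub_C_eq_prod hζ hM (one_pow M)
    have hu' := congrArg (Polynomial.eval u⁻¹) hpoly
    simp only [eval_sub, eval_pow, eval_X, eval_C, eval_prod, mul_one] at hu'
    calc ∏ j ∈ range M, (1 - ζ ^ j * u) = ∏ j ∈ range M, (u * (u⁻¹ - ζ ^ j)) := by
          apply Finset.prod_congr rfl
          intro j _
          rw [mul_sub, mul_inv_cancel₀ hu, mul_comm]
      _ = u ^ M * ∏ j ∈ range M, (u⁻¹ - ζ ^ j) := by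
          rw [Finset.prod_mul_distrib, Finset.prod_const, Finset.card_range]
      _ = u ^ M * (u⁻¹ ^ M - 1) := by rw [← hu']
      _ = 1 - u ^ M := by rw [inv_pow, mul_sub, mul_inv_cancel₀ (pow_ne_zero _ hu), mul_one]


lemma red {K : Type*} [Field K] {M : ℕ} (hM : 0 < M) {a : K} (ha : a ≠ 0) :
    ∀ (t : ℕ) (P : Polynomial K), (P = 0 ∨ P.natDegree < M * t) →
    ∃ c : Fin M → Fin (t + 1) → K,
      algebraMap (Polynomial K) (RatFunc K) P *
        ((1 - RatFunc.C a * RatFunc.X ^ M) ^ t)⁻¹ =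
      ∑ j : Fin M, ∑ k : Fin (t + 1),
        RatFunc.C (c j k) * RatFunc.X ^ (j : ℕ) *
          ((1 - RatFunc.C a * RatFunc.X ^ M) ^ (k : ℕ))⁻¹ := by
  -- abbreviations
  set E : RatFunc K := 1 - RatFunc.C a * RatFunc.X ^ M with hEdef
  set D : Polynomial K := 1 - Polynomial.C a * Polynomial.X ^ M with hDdef
  set D₀ : Polynomial K := Polynomial.X ^ M + Polynomial.C (-a⁻¹) with hD0def
  have hD0monic : D₀.Monic := monic_X_pow_add_C _ hM.ne'
  have hD0deg : D₀.natDegree = M := natDegree_X_pow_add_C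
  have hDD0 : D = Polynomial.C (-a) * D₀ := by
    rw [hDdef, hD0def]
    rw [mul_add, ← Polynomial.C_mul]
    have : (-a) * (-a⁻¹) = 1 := by field_simp
    rw [this, Polynomial.C_1, Polynomial.C_neg]
    ring
  have hDne : D ≠ 0 := by
    rw [hDD0]
    exact mul_ne_zero (by simpa using neg_ne_zero.mpr ha) hD0monic.ne_zero
  have hDdeg : D.natDegree = M := by
    rw [hDD0, natDegree_C_mul (neg_ne_zero.mpr ha), hD0deg]
  have hED : E = algebraMap (Polynomial K) (RatFunc K) D := by
    rw [hEdef, hDdef]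
    simp [map_sub, map_mul, map_pow, RatFunc.algebraMap_C, RatFunc.algebraMap_X]
  have hEne : E ≠ 0 := by
    rw [hED]
    simpa using (RatFunc.algebraMap_ne_zero hDne)
  intro t
  induction t with
  | zero =>
    intro P hP
    rcases hP with rfl | h
    · exact ⟨0, by simp⟩
    · omega
  | succ t ih =>
    intro P hP
    set S : Polynomial K := P %ₘ D₀ with hSdef
    set R : Polynomial K := Polynomial.C (-a⁻¹) * (P /ₘ D₀) with hRdef
    have hPeq : P = D * R + S := by
      have h := modByMonic_add_div P D₀
      rw [hRdef, hDD0]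
      calc P = P %ₘ D₀ + D₀ * (P /ₘ D₀) := h.symm
        _ = _ := by
          rw [hSdef]
          have : Polynomial.C (-a) * D₀ * (Polynomial.C (-a⁻¹) * (P /ₘ D₀))
              = (Polynomial.C (-a) * Polynomial.C (-a⁻¹)) * (D₀ * (P /ₘ D₀)) := by ring
          rw [this, ← Polynomial.C_mul]
          have h2 : (-a) * (-a⁻¹) = 1 := by field_simp
          rw [h2, Polynomial.C_1, one_mul, add_comm]
    have hSdeg : S.natDegree < M := by
      rcases eq_or_ne S 0 with h0 | h0
      · simpa [h0] using hM
      · have h1 := degree_modByMonic_lt P hD0monic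
        have h2 := Polynomial.natDegree_lt_natDegree h0 h1
        rwa [hD0deg] at h2
    have hRcase : R = 0 ∨ R.natDegree < M * t := by
      rcases eq_or_ne R 0 with h0 | h0
      · exact Or.inl h0
      · right
        have hmul : (D * R).natDegree = M + R.natDegree := by
          rw [natDegree_mul hDne h0, hDdeg]
        have hDR : D * R = P - S := by rw [hPeq]; ring
        have hle : (D * R).natDegree < M * (t + 1) := by
          rw [hDR]
          rcases hP with rfl | hP
          · calc (0 - S).natDegree = S.natDegree := by rw [zero_sub, natDegree_neg]
              _ < M := hSdeg
              _ ≤ M * (t + 1) := Nat.le_mul_of_pos_right M (Nat.succ_pos t)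
          · calc (P - S).natDegree ≤ max P.natDegree S.natDegree := natDegree_sub_le P S
              _ < M * (t + 1) := by
                  apply max_lt hP (lt_of_lt_of_le hSdeg (Nat.le_mul_of_pos_right M (Nat.succ_pos t)))
        rw [Nat.mul_succ] at hle
        omega
    obtain ⟨c', hc'⟩ := ih R hRcase
    refine ⟨fun j k => if h : (k : ℕ) < t + 1 then c' j ⟨(k : ℕ), h⟩ else S.coeff j, ?_⟩
    -- rewrite LHS
    have hstep : algebraMap (Polynomial K) (RatFunc K) P * (E ^ (t + 1))⁻¹
        = (∑ j ∈ range M, RatFunc.C (S.coeff j) * RatFunc.X ^ j) * (E ^ (t + 1))⁻¹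
          + algebraMap (Polynomial K) (RatFunc K) R * (E ^ t)⁻¹ := by
      have hSsum : algebraMap (Polynomial K) (RatFunc K) S
          = ∑ j ∈ range M, RatFunc.C (S.coeff j) * RatFunc.X ^ j := by
        conv_lhs => rw [S.as_sum_range' M hSdeg]
        rw [map_sum]
        apply Finset.sum_congr rfl
        intro j _
        rw [← Polynomial.C_mul_X_pow_eq_monomial, map_mul, map_pow,
          RatFunc.algebraMap_C, RatFunc.algebraMap_X]
      have hPmap : algebraMap (Polynomial K) (RatFunc K) P
          = E * algebraMap (Polynomial K) (RatFunc K) R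
            + algebraMap (Polynomial K) (RatFunc K) S := by
        rw [hED, ← map_mul, ← map_add, ← hPeq]
      rw [hPmap, hSsum]
      have hEt : E ^ (t + 1) ≠ 0 := pow_ne_zero _ hEne
      have hEt' : E ^ t ≠ 0 := pow_ne_zero _ hEne
      field_simp
      ring
    rw [hstep, hc']
    -- now reorganize RHS
    rw [Finset.sum_mul]
    have hsplit : ∀ j : Fin M,
        (∑ k : Fin (t + 1 + 1),
          RatFunc.C (if h : (k : ℕ) < t + 1 then c' j ⟨(k : ℕ), h⟩ else S.coeff j)
            * RatFunc.X ^ (j : ℕ) * (E ^ (k : ℕ))⁻¹)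
        = (∑ k : Fin (t + 1), RatFunc.C (c' j k) * RatFunc.X ^ (j : ℕ) * (E ^ (k : ℕ))⁻¹)
          + RatFunc.C (S.coeff j) * RatFunc.X ^ (j : ℕ) * (E ^ (t + 1))⁻¹ := by
      intro j
      rw [Fin.sum_univ_castSucc]
      have h1 : ∀ k : Fin (t + 1),
          RatFunc.C (if h : ((Fin.castSucc k : Fin (t + 1 + 1)) : ℕ) < t + 1 then
              c' j ⟨((Fin.castSucc k : Fin (t + 1 + 1)) : ℕ), h⟩ else S.coeff j)
            * RatFunc.X ^ (j : ℕ) * (E ^ ((Fin.castSucc k : Fin (t + 1 + 1)) : ℕ))⁻¹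
          = RatFunc.C (c' j k) * RatFunc.X ^ (j : ℕ) * (E ^ (k : ℕ))⁻¹ := by
        intro k
        have hk : ((Fin.castSucc k : Fin (t + 1 + 1)) : ℕ) = (k : ℕ) := rfl
        rw [hk, dif_pos k.isLt]
      rw [Finset.sum_congr rfl (fun k _ => h1 k)]
      have hlast : ((Fin.last (t + 1) : Fin (t + 1 + 1)) : ℕ) = t + 1 := rfl
      rw [hlast, dif_neg (lt_irrefl (t + 1))]
    rw [Finset.sum_congr rfl (fun j _ => hsplit j), Finset.sum_add_distrib]
    rw [add_comm]
    congr 1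
    exact (Fin.sum_univ_eq_sum_range
      (fun j => RatFunc.C (S.coeff j) * RatFunc.X ^ j * (E ^ (t + 1))⁻¹) M).symm


/-- over a nonarchimedean normed field (modeling a complete extension of
`ℚ_p` containing a primitive `M`-th root of unity `ζ`), if `|b - ζ^i| < 1` for some
`i < M`, then `1/(1-bz)^t` is a linear combination of functions `z^j/(1-az^M)^k`
with `0 ≤ k`, `0 ≤ j < M` and `|1-a| < 1`, where `a = b^M`. -/
theorem stmt0 {K : Type*} [NormedField K]
    (hna : IsNonarchimedean (norm : K → ℝ))
    (M : ℕ) (hM : 0 < M) (ζ : K) (hζ : IsPrimitiveRoot ζ M)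
    (b : K) (t : ℕ) (i : ℕ) (hi : i < M) (hb : ‖b - ζ ^ i‖ < 1) :
    ‖1 - b ^ M‖ < 1 ∧
    ∃ (n : ℕ) (c : Fin M → Fin (n + 1) → K),
      ((1 - RatFunc.C b * RatFunc.X) ^ t)⁻¹ =
        ∑ j : Fin M, ∑ k : Fin (n + 1),
          RatFunc.C (c j k) * RatFunc.X ^ (j : ℕ) *
            ((1 - RatFunc.C (b ^ M) * RatFunc.X ^ M) ^ (k : ℕ))⁻¹ := by
  have h1 : ‖1 - b ^ M‖ < 1 := norm_part hna M hM ζ hζ b i hb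
  refine ⟨h1, t, ?_⟩
  have ha : b ^ M ≠ 0 := by
    intro h
    rw [h, sub_zero, norm_one] at h1
    exact lt_irrefl 1 h1
  rcases Nat.eq_zero_or_pos t with rfl | ht
  · refine ⟨fun j _ => if (j : ℕ) = 0 then 1 else 0, ?_⟩
    have hterm : ∀ j : Fin M,
        (∑ k : Fin (0 + 1), RatFunc.C (if (j : ℕ) = 0 then (1:K) else 0) * RatFunc.X ^ (j : ℕ)
          * ((1 - RatFunc.C (b ^ M) * RatFunc.X ^ M) ^ (k : ℕ))⁻¹)
        = if (j : ℕ) = 0 then 1 else 0 := by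
      intro j
      rw [Fin.sum_univ_one]
      split_ifs with h0
      · simp [h0]
      · simp
    rw [Finset.sum_congr rfl (fun j _ => hterm j)]
    rw [pow_zero, inv_one]
    rw [Finset.sum_eq_single (⟨0, hM⟩ : Fin M)]
    · simp
    · intro j _ hj
      rw [if_neg]
      intro h0
      exact hj (Fin.ext h0)
    · intro h
      exact absurd (Finset.mem_univ _) h
  · set Q : Polynomial K :=
      ∏ j ∈ Finset.Ico 1 M, (1 - Polynomial.C (b * ζ ^ j) * Polynomial.X) with hQdef
    have hQdeg : (Q ^ t).natDegree < M * t := by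
      have hq1 : Q.natDegree ≤ M - 1 := by
        refine le_trans (natDegree_prod_le _ _) ?_
        calc ∑ j ∈ Finset.Ico 1 M, (1 - Polynomial.C (b * ζ ^ j) * Polynomial.X).natDegree
            ≤ ∑ _j ∈ Finset.Ico 1 M, 1 := by
              apply Finset.sum_le_sum
              intro j _
              refine le_trans (natDegree_sub_le _ _) (max_le (by simp) ?_)
              refine le_trans natDegree_mul_le ?_
              rw [natDegree_C, natDegree_X]
          _ = M - 1 := by rw [Finset.sum_const, Nat.card_Ico, smul_eq_mul, mul_one]
      obtain ⟨m, rfl⟩ := Nat.exists_eq_succ_of_ne_zero hM.ne'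
      calc (Q ^ t).natDegree ≤ t * Q.natDegree := natDegree_pow_le
        _ ≤ t * m := by
            apply Nat.mul_le_mul_left
            simpa using hq1
        _ < t * m + t := by omega
        _ = (m + 1) * t := by ring
    have hL : (1 : Polynomial K) - Polynomial.C b * Polynomial.X ≠ 0 := by
      intro h
      have h2 := congrArg (Polynomial.eval 0) h
      simp at h2
    have hfac : (1 - RatFunc.C b * RatFunc.X) * algebraMap (Polynomial K) (RatFunc K) Q
        = 1 - RatFunc.C (b ^ M) * RatFunc.X ^ M := by
      have hz' : IsPrimitiveRoot (RatFunc.C ζ) M :=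
        hζ.map_of_injective (RingHom.injective (RatFunc.C : K →+* RatFunc K))
      have hprod := prod_one_sub hM hz' (RatFunc.C b * RatFunc.X)
      rw [Finset.range_eq_Ico, Finset.prod_eq_prod_Ico_succ_bot hM] at hprod
      have hmap : algebraMap (Polynomial K) (RatFunc K) Q
          = ∏ j ∈ Finset.Ico 1 M, (1 - (RatFunc.C ζ) ^ j * (RatFunc.C b * RatFunc.X)) := by
        rw [hQdef, map_prod]
        apply Finset.prod_congr rfl
        intro j _
        rw [map_sub, map_one, map_mul, RatFunc.algebraMap_C, RatFunc.algebraMap_X, map_mul,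
          map_pow]
        ring
      rw [hmap]
      rw [pow_zero, one_mul] at hprod
      rw [hprod, mul_pow, ← map_pow]
    have hLmap : algebraMap (Polynomial K) (RatFunc K) (1 - Polynomial.C b * Polynomial.X)
        = 1 - RatFunc.C b * RatFunc.X := by
      rw [map_sub, map_one, map_mul, RatFunc.algebraMap_C, RatFunc.algebraMap_X]
    have hLne : (1 - RatFunc.C b * RatFunc.X) ≠ 0 := by
      rw [← hLmap]
      exact RatFunc.algebraMap_ne_zero hL
    have hEne : (1 - RatFunc.C (b ^ M) * RatFunc.X ^ M) ≠ 0 := by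
      rw [← hfac]
      apply mul_ne_zero hLne
      apply RatFunc.algebraMap_ne_zero
      rw [hQdef]
      apply Finset.prod_ne_zero_iff.mpr
      intro j _
      intro h
      have h2 := congrArg (Polynomial.eval 0) h
      simp at h2
    have hQne : algebraMap (Polynomial K) (RatFunc K) Q ≠ 0 := by
      intro h
      exact hEne (by rw [← hfac, h, mul_zero])
    obtain ⟨c, hc⟩ := red hM ha t (Q ^ t) (Or.inr hQdeg)
    refine ⟨c, ?_⟩
    rw [← hc]
    have hEt : (1 - RatFunc.C (b ^ M) * RatFunc.X ^ M) ^ t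
        = (1 - RatFunc.C b * RatFunc.X) ^ t * (algebraMap (Polynomial K) (RatFunc K) Q) ^ t := by
      rw [← mul_pow, hfac]
    rw [map_pow, hEt, mul_inv]
    rw [← mul_assoc, mul_comm ((algebraMap (Polynomial K) (RatFunc K) Q) ^ t) _, mul_assoc,
      mul_inv_cancel₀ (pow_ne_zero _ hQne), mul_one]
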